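/- Let M be a von Neumann algebra on a complex Hilbert space H with commutant M′, and let Ω ∈ H be cyclic both for M and for M′. Let Φ, Φ′ ∈ H and suppose there exists a sequence (Fₙ) of elements of M such that FₙΩ → Φ and Fₙ*Ω → Φ′ in norm. Then there exists a closed, densely defined linear operator F on H such that: (i) for every A′ ∈ M′ the vector A′Ω lies in the domain of F and F(A′Ω) = A′Φ; in particular Ω is in the domain of F and FΩ = Φ; (ii) Ω is in the domain of the adjoint F* and F*Ω = Φ′; (iii) F is affiliated with M, i.e. for every A′ ∈ M′ and every ψ in the domain of F, A′ψ lies in the domain of F and F(A′ψ) = A′(Fψ); and (iv) F* is affiliated with M in the same sense. -/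

import Mathlib

open Filter Topology

open scoped InnerProductSpace

/-- `Ω` is a cyclic vector for the set `N` of bounded operators on `H`:
the linear span of `{A Ω : A ∈ N}` is dense in `H`. -/
def IsCyclicVector {H : Type*} [NormedAddCommGroup H] [InnerProductSpace ℂ H]
    (N : Set (H →L[ℂ] H)) (Ω : H) : Prop :=
  Dense ((Submodule.span ℂ ((fun A : H →L[ℂ] H => A Ω) '' N) : Submodule ℂ H) : Set H)

/-- Lemma 2.2 of the paper: if `Ω` is cyclic for a von Neumann algebra `M` and for its
commutant `M′`, and if `Φ, Φ′` are norm limits of `Fₙ Ω`, `Fₙ* Ω` for a sequence `Fₙ ∈ M`,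
then there is a closed, densely defined operator `F` with `F(A′Ω) = A′Φ` for all `A′ ∈ M′`
(in particular `FΩ = Φ`), with `Ω` in the domain of `F*` and `F*Ω = Φ′`, and such that both
`F` and `F*` are affiliated with `M`. -/
theorem exists_closed_affiliated_operator
    {H : Type*} [NormedAddCommGroup H] [InnerProductSpace ℂ H] [CompleteSpace H]
    (M : VonNeumannAlgebra H) (Ω : H)
    (hcycM : IsCyclicVector (M : Set (H →L[ℂ] H)) Ω)
    (hcycM' : IsCyclicVector (M.commutant : Set (H →L[ℂ] H)) Ω)
    (Φ Φ' : H)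
    (Fseq : ℕ → H →L[ℂ] H) (hFmem : ∀ n, Fseq n ∈ M)
    (hΦ : Tendsto (fun n => Fseq n Ω) atTop (𝓝 Φ))
    (hΦ' : Tendsto (fun n => (ContinuousLinearMap.adjoint (Fseq n)) Ω) atTop (𝓝 Φ')) :
    ∃ F : H →ₗ.[ℂ] H,
      Dense (F.domain : Set H) ∧ F.IsClosed ∧
      -- (i) for every `A′ ∈ M′`, `A′Ω` lies in the domain of `F` and `F(A′Ω) = A′Φ`;
      (∀ A' ∈ M.commutant, ∃ h : A' Ω ∈ F.domain, F ⟨A' Ω, h⟩ = A' Φ) ∧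
      -- in particular `Ω` is in the domain of `F` and `FΩ = Φ`;
      (∃ hΩ : Ω ∈ F.domain, F ⟨Ω, hΩ⟩ = Φ) ∧
      -- (ii) `Ω` is in the domain of the adjoint `F*` and `F*Ω = Φ′`;
      (∃ hΩ' : Ω ∈ F.adjoint.domain, F.adjoint ⟨Ω, hΩ'⟩ = Φ') ∧
      -- (iii) `F` is affiliated with `M`;
      (∀ A' ∈ M.commutant, ∀ ψ (hψ : ψ ∈ F.domain),
          ∃ h : A' ψ ∈ F.domain, F ⟨A' ψ, h⟩ = A' (F ⟨ψ, hψ⟩)) ∧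
      -- (iv) `F*` is affiliated with `M` in the same sense.
      (∀ A' ∈ M.commutant, ∀ φ (hφ : φ ∈ F.adjoint.domain),
          ∃ h : A' φ ∈ F.adjoint.domain, F.adjoint ⟨A' φ, h⟩ = A' (F.adjoint ⟨φ, hφ⟩)) := by
  classical
  set gen : Set (H × H) :=
    (fun A' : H →L[ℂ] H => (A' Ω, A' Φ)) '' (M.commutant : Set (H →L[ℂ] H)) with hgen_def
  set G : Submodule ℂ (H × H) := (Submodule.span ℂ gen).topologicalClosure with hG_def
  -- commutation facts
  have hcomm : ∀ A' ∈ M.commutant, ∀ n, A' (Fseq n Ω) = Fseq n (A' Ω) := by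
    intro A' hA' n
    have h := (VonNeumannAlgebra.mem_commutant_iff.mp hA') (Fseq n) (hFmem n)
    calc A' (Fseq n Ω) = (A' * Fseq n) Ω := rfl
      _ = (Fseq n * A') Ω := by rw [h]
      _ = Fseq n (A' Ω) := rfl
  have hcomm' : ∀ B' ∈ M.commutant, ∀ n,
      (ContinuousLinearMap.adjoint (Fseq n)) (B' Ω)
        = B' ((ContinuousLinearMap.adjoint (Fseq n)) Ω) := by
    intro B' hB' n
    have hst : star (Fseq n) ∈ M := star_mem (hFmem n)
    rw [ContinuousLinearMap.star_eq_adjoint] at hst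
    have h := (VonNeumannAlgebra.mem_commutant_iff.mp hB') _ hst
    calc (ContinuousLinearMap.adjoint (Fseq n)) (B' Ω)
        = ((ContinuousLinearMap.adjoint (Fseq n)) * B') Ω := rfl
      _ = (B' * (ContinuousLinearMap.adjoint (Fseq n))) Ω := by rw [h]
      _ = _ := rfl
  -- the basic limit identity on generators
  have hgenrel : ∀ A' ∈ M.commutant, ∀ B' ∈ M.commutant,
      ⟪B' Ω, A' Φ⟫_ℂ = ⟪B' Φ', A' Ω⟫_ℂ := by
    intro A' hA' B' hB'
    have t1 : Tendsto (fun n => ⟪B' Ω, A' (Fseq n Ω)⟫_ℂ) atTop (𝓝 ⟪B' Ω, A' Φ⟫_ℂ) :=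
      tendsto_const_nhds.inner ((A'.continuous.tendsto Φ).comp hΦ)
    have t2 : Tendsto (fun n => ⟪B' ((ContinuousLinearMap.adjoint (Fseq n)) Ω), A' Ω⟫_ℂ)
        atTop (𝓝 ⟪B' Φ', A' Ω⟫_ℂ) :=
      (((B'.continuous.tendsto Φ').comp hΦ').inner tendsto_const_nhds)
    have heq : ∀ n, ⟪B' Ω, A' (Fseq n Ω)⟫_ℂ
        = ⟪B' ((ContinuousLinearMap.adjoint (Fseq n)) Ω), A' Ω⟫_ℂ := by
      intro n
      rw [hcomm A' hA' n, ← ContinuousLinearMap.adjoint_inner_left, hcomm' B' hB' n]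
    exact tendsto_nhds_unique (t1.congr heq) t2
  -- the key identity on all of `G`
  have key : ∀ B' ∈ M.commutant, ∀ p ∈ G, ⟪B' Ω, p.2⟫_ℂ = ⟪B' Φ', p.1⟫_ℂ := by
    intro B' hB'
    set φ : (H × H) →L[ℂ] ℂ :=
      (innerSL ℂ (B' Ω)).comp (ContinuousLinearMap.snd ℂ H H)
        - (innerSL ℂ (B' Φ')).comp (ContinuousLinearMap.fst ℂ H H) with hφ_def
    have hspan : Submodule.span ℂ gen ≤ φ.ker := by
      rw [Submodule.span_le]
      rintro _ ⟨A', hA', rfl⟩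
      simp only [SetLike.mem_coe, LinearMap.mem_ker, ContinuousLinearMap.coe_coe, hφ_def,
        ContinuousLinearMap.sub_apply, ContinuousLinearMap.coe_comp', Function.comp_apply,
        ContinuousLinearMap.coe_snd', ContinuousLinearMap.coe_fst', innerSL_apply_apply, sub_eq_zero]
      exact hgenrel A' hA' B' hB'
    have hker : G ≤ φ.ker :=
      Submodule.topologicalClosure_minimal _ hspan (ContinuousLinearMap.isClosed_ker φ)
    intro p hp
    have := hker hp
    simp only [LinearMap.mem_ker, ContinuousLinearMap.coe_coe, hφ_def,
      ContinuousLinearMap.sub_apply, ContinuousLinearMap.coe_comp', Function.comp_apply,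
      ContinuousLinearMap.coe_snd', ContinuousLinearMap.coe_fst', innerSL_apply_apply,
      sub_eq_zero] at this
    exact this
  -- `G` is the graph of an operator
  have hg : ∀ x : H × H, x ∈ G → x.fst = 0 → x.snd = 0 := by
    intro x hx hx1
    have h0 : ∀ B' ∈ M.commutant, ⟪x.2, B' Ω⟫_ℂ = 0 := by
      intro B' hB'
      have := key B' hB' x hx
      rw [hx1, inner_zero_right] at this
      rw [← inner_conj_symm, this, map_zero]
    have hspan : Submodule.span ℂ ((fun A : H →L[ℂ] H => A Ω) '' (M.commutant : Set _))
        ≤ (innerSL ℂ x.2).ker := by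
      rw [Submodule.span_le]
      rintro _ ⟨B', hB', rfl⟩
      simpa using h0 B' hB'
    have hker : (Submodule.span ℂ
        ((fun A : H →L[ℂ] H => A Ω) '' (M.commutant : Set _))).topologicalClosure
        ≤ (innerSL ℂ x.2).ker :=
      Submodule.topologicalClosure_minimal _ hspan (ContinuousLinearMap.isClosed_ker _)
    have htop := Submodule.dense_iff_topologicalClosure_eq_top.mp hcycM'
    rw [htop] at hker
    have : ⟪x.2, x.2⟫_ℂ = 0 := by
      have := hker (Submodule.mem_top (x := x.2))
      simpa using this
    exact inner_self_eq_zero.mp this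
  set F : H →ₗ.[ℂ] H := G.toLinearPMap with hF_def
  have hgraph : F.graph = G := Submodule.toLinearPMap_graph_eq G hg
  have hsub : Submodule.span ℂ gen ≤ G := Submodule.le_topologicalClosure _
  have hmemgen : ∀ A' ∈ M.commutant, (A' Ω, A' Φ) ∈ G := fun A' hA' =>
    hsub (Submodule.subset_span ⟨A', hA', rfl⟩)
  have hval : ∀ x y : H, (x, y) ∈ G → ∃ h : x ∈ F.domain, F ⟨x, h⟩ = y := by
    intro x y hxy
    rw [← hgraph, LinearPMap.mem_graph_iff] at hxy
    obtain ⟨u, hu1, hu2⟩ := hxy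
    have hu1' : (u : H) = x := hu1
    refine ⟨hu1' ▸ u.2, ?_⟩
    have : (⟨x, hu1' ▸ u.2⟩ : F.domain) = u := Subtype.ext hu1'.symm
    rw [this]
    exact hu2
  have hdense : Dense (F.domain : Set H) := by
    have h1 : Submodule.span ℂ ((fun A : H →L[ℂ] H => A Ω) '' (M.commutant : Set _))
        ≤ F.domain := by
      rw [Submodule.span_le]
      rintro _ ⟨A', hA', rfl⟩
      exact (hval _ _ (hmemgen A' hA')).1
    exact hcycM'.mono h1
  have hclosed : F.IsClosed := by
    show _root_.IsClosed (F.graph : Set (H × H))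
    rw [hgraph]
    exact (Submodule.span ℂ gen).isClosed_topologicalClosure
  -- affiliation at the level of the graph
  have haffG : ∀ A' ∈ M.commutant, ∀ p ∈ G, (A' p.1, A' p.2) ∈ G := by
    intro A' hA' p hp
    set T : (H × H) →L[ℂ] (H × H) := A'.prodMap A' with hT_def
    have hmapspan : ∀ q ∈ (Submodule.span ℂ gen : Set (H × H)),
        T q ∈ (Submodule.span ℂ gen : Set (H × H)) := by
      intro q hq
      have : Submodule.map (T : (H × H) →ₗ[ℂ] (H × H)) (Submodule.span ℂ gen)
          ≤ Submodule.span ℂ gen := by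
        rw [Submodule.map_span, Submodule.span_le]
        rintro _ ⟨_, ⟨B', hB', rfl⟩, rfl⟩
        apply Submodule.subset_span
        exact ⟨A' * B', mul_mem hA' hB', rfl⟩
      exact this ⟨q, hq, rfl⟩
    have hpc : p ∈ closure (Submodule.span ℂ gen : Set (H × H)) := hp
    have h1 : T p ∈ closure (T '' (Submodule.span ℂ gen : Set (H × H))) :=
      image_closure_subset_closure_image T.continuous ⟨p, hpc, rfl⟩
    have h2 : T '' (Submodule.span ℂ gen : Set (H × H))
        ⊆ (Submodule.span ℂ gen : Set (H × H)) := by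
      rintro _ ⟨q, hq, rfl⟩; exact hmapspan q hq
    have h3 : T p ∈ closure (Submodule.span ℂ gen : Set (H × H)) :=
      closure_mono h2 h1
    exact h3
  have haff : ∀ A' ∈ M.commutant, ∀ ψ (hψ : ψ ∈ F.domain),
      ∃ h : A' ψ ∈ F.domain, F ⟨A' ψ, h⟩ = A' (F ⟨ψ, hψ⟩) := by
    intro A' hA' ψ hψ
    have hp : (ψ, F ⟨ψ, hψ⟩) ∈ G := by
      rw [← hgraph]; exact F.mem_graph ⟨ψ, hψ⟩
    exact hval _ _ (haffG A' hA' _ hp)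
  -- membership of `Ω` in the adjoint domain
  have hadjfun : ∀ x : F.domain, ⟪Φ', (x : H)⟫_ℂ = ⟪Ω, F x⟫_ℂ := by
    intro x
    have hp : ((x : H), F x) ∈ G := by
      rw [← hgraph]; exact F.mem_graph x
    have := key 1 (one_mem _) _ hp
    simpa using this.symm
  have hΩadj : Ω ∈ F.adjoint.domain :=
    LinearPMap.mem_adjoint_domain_of_exists (T := F) Ω ⟨Φ', hadjfun⟩
  refine ⟨F, hdense, hclosed, ?_, ?_, ?_, haff, ?_⟩
  · exact fun A' hA' => hval _ _ (hmemgen A' hA')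
  · have := hval Ω Φ (by simpa using hmemgen 1 (one_mem _))
    exact this
  · exact ⟨hΩadj, LinearPMap.adjoint_apply_eq hdense ⟨Ω, hΩadj⟩ hadjfun⟩
  · intro A' hA' φ hφ
    have hA's : ContinuousLinearMap.adjoint A' ∈ M.commutant := by
      rw [← ContinuousLinearMap.star_eq_adjoint]; exact star_mem hA'
    set z := F.adjoint ⟨φ, hφ⟩ with hz_def
    have hfa := LinearPMap.adjoint_isFormalAdjoint hdense (T := F)
    have hx₀ : ∀ x : F.domain, ⟪A' z, (x : H)⟫_ℂ = ⟪A' φ, F x⟫_ℂ := by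
      intro x
      obtain ⟨hx2, hx3⟩ := haff _ hA's _ x.2
      have hxx : (⟨(x : H), x.2⟩ : F.domain) = x := Subtype.ext rfl
      rw [hxx] at hx3
      calc ⟪A' z, (x : H)⟫_ℂ
          = ⟪z, (ContinuousLinearMap.adjoint A') (x : H)⟫_ℂ :=
            (ContinuousLinearMap.adjoint_inner_right A' z (x : H)).symm
        _ = ⟪φ, F ⟨(ContinuousLinearMap.adjoint A') (x : H), hx2⟩⟫_ℂ :=
            hfa ⟨φ, hφ⟩ ⟨_, hx2⟩
        _ = ⟪φ, (ContinuousLinearMap.adjoint A') (F x)⟫_ℂ := by rw [hx3]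
        _ = ⟪A' φ, F x⟫_ℂ := ContinuousLinearMap.adjoint_inner_right A' φ (F x)
    have hmem : A' φ ∈ F.adjoint.domain :=
      LinearPMap.mem_adjoint_domain_of_exists (T := F) _ ⟨A' z, hx₀⟩
    exact ⟨hmem, LinearPMap.adjoint_apply_eq hdense ⟨A' φ, hmem⟩ hx₀⟩
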